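/- arXiv:2003.05485 — 5 statements merged into one kernel-verified Lean document; each statement's English description precedes it below -/
import Mathlib

section
/- Let θ > 0 and u₀ > 0. Define s = θ⁻¹ ln(θu₀ + 1 + ((θu₀ + 1)² − 1)^{1/2}) and u(x) = θ⁻¹(cosh(θ(x − s)) − 1). Then s > 0 and u is an exact solution of the obstacle free boundary problem: u''(x) = θ(1 + (u'(x))²)^{1/2} for all x ∈ (0, s), u(0) = u₀, u(s) = 0, and u'(s) = 0. -/
/-- Exact solution of the obstacle problem on a string: for `θ > 0` and
`u₀ > 0`, with `s = θ⁻¹ log(θu₀ + 1 + ((θu₀+1)² - 1)^(1/2))` and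
`u(x) = θ⁻¹ (cosh(θ(x - s)) - 1)`, one has `s > 0` and `u` solves
`u'' = θ(1 + (u')²)^(1/2)` on `(0, s)` with `u(0) = u₀`, `u(s) = 0`,
`u'(s) = 0`. -/
theorem obstacle_problem_exact_solution (θ u₀ : ℝ) (hθ : 0 < θ) (hu₀ : 0 < u₀) :
    let s : ℝ := θ⁻¹ * Real.log (θ * u₀ + 1 + Real.sqrt ((θ * u₀ + 1) ^ 2 - 1))
    let u : ℝ → ℝ := fun x => θ⁻¹ * (Real.cosh (θ * (x - s)) - 1)
    0 < s ∧
    (∀ x ∈ Set.Ioo (0 : ℝ) s,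
      deriv (deriv u) x = θ * Real.sqrt (1 + (deriv u x) ^ 2)) ∧
    u 0 = u₀ ∧ u s = 0 ∧ deriv u s = 0 := by
  intro s u
  have hθ' : θ ≠ 0 := ne_of_gt hθ
  set a : ℝ := θ * u₀ + 1 with ha_def
  have ha : 1 < a := by nlinarith
  have hsq : 0 < a ^ 2 - 1 := by nlinarith
  have hsqrt : 0 < Real.sqrt (a ^ 2 - 1) := Real.sqrt_pos.mpr hsq
  have hy : 1 < a + Real.sqrt (a ^ 2 - 1) := by linarith
  have hy0 : 0 < a + Real.sqrt (a ^ 2 - 1) := by linarith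
  have hlog : 0 < Real.log (a + Real.sqrt (a ^ 2 - 1)) := Real.log_pos hy
  have hs : 0 < s := mul_pos (inv_pos.mpr hθ) hlog
  -- first derivative
  have hd1 : ∀ x, HasDerivAt u (Real.sinh (θ * (x - s))) x := by
    intro x
    have h1 : HasDerivAt (fun x : ℝ => θ * (x - s)) θ x := by
      simpa using ((hasDerivAt_id x).sub_const s).const_mul θ
    have h2 := ((Real.hasDerivAt_cosh (θ * (x - s))).comp x h1).sub_const 1
    have h3 := h2.const_mul θ⁻¹
    exact h3.congr_deriv (by rw [mul_comm (Real.sinh _) θ, inv_mul_cancel_left₀ hθ'])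
  have hderiv : deriv u = fun x => Real.sinh (θ * (x - s)) :=
    funext fun x => (hd1 x).deriv
  have hd2 : ∀ x, deriv (deriv u) x = θ * Real.cosh (θ * (x - s)) := by
    intro x
    rw [hderiv]
    have h1 : HasDerivAt (fun x : ℝ => θ * (x - s)) θ x := by
      simpa using ((hasDerivAt_id x).sub_const s).const_mul θ
    have h2 : HasDerivAt (fun x => Real.sinh (θ * (x - s)))
        (Real.cosh (θ * (x - s)) * θ) x := by
      exact (Real.hasDerivAt_sinh (θ * (x - s))).comp x h1
    rw [h2.deriv]; ring
  refine ⟨hs, ?_, ?_, ?_, ?_⟩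
  · intro x _
    rw [hd2 x, hderiv]
    have : 1 + Real.sinh (θ * (x - s)) ^ 2 = Real.cosh (θ * (x - s)) ^ 2 := by
      rw [Real.cosh_sq]; ring
    rw [this, Real.sqrt_sq (Real.cosh_pos _).le]
  · show θ⁻¹ * (Real.cosh (θ * (0 - s)) - 1) = u₀
    have hts : θ * (0 - s) = -Real.log (a + Real.sqrt (a ^ 2 - 1)) := by
      simp only [zero_sub, mul_neg]
      rw [show s = θ⁻¹ * Real.log (a + Real.sqrt (a ^ 2 - 1)) from rfl]
      field_simp
    rw [hts, Real.cosh_neg, Real.cosh_log hy0]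
    have hinv : (a + Real.sqrt (a ^ 2 - 1))⁻¹ = a - Real.sqrt (a ^ 2 - 1) := by
      have hss : Real.sqrt (a ^ 2 - 1) ^ 2 = a ^ 2 - 1 := Real.sq_sqrt hsq.le
      have hmul : (a + Real.sqrt (a ^ 2 - 1)) * (a - Real.sqrt (a ^ 2 - 1)) = 1 := by
        nlinarith
      exact inv_eq_of_mul_eq_one_right hmul
    rw [hinv]
    have : (a + Real.sqrt (a ^ 2 - 1) + (a - Real.sqrt (a ^ 2 - 1))) / 2 = a := by ring
    rw [this]
    field_simp [ha_def]
    linarith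
  · show θ⁻¹ * (Real.cosh (θ * (s - s)) - 1) = 0
    simp
  · rw [hderiv]; simp
end

section
/- Let θ > 0 and u₀ > 0. Suppose s > 0 and u : ℝ → ℝ is twice continuously differentiable on [0, s] and satisfies u''(x) = θ(1 + (u'(x))²)^{1/2} on (0, s), u(0) = u₀, u(s) = 0, and u'(s) = 0. Then necessarily u(x) = θ⁻¹(cosh(θ(x − s)) − 1) for all x ∈ [0, s] and s = θ⁻¹ ln(θu₀ + 1 + ((θu₀ + 1)² − 1)^{1/2}); in particular, the free boundary s and the solution u are unique. -/
/-- Uniqueness for the obstacle problem on a string: any twice continuously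
differentiable solution of `u'' = θ(1 + (u')²)^(1/2)` on `(0, s)` with
`u(0) = u₀`, `u(s) = 0`, `u'(s) = 0` and `s > 0` is necessarily the exact
solution `u(x) = θ⁻¹ (cosh(θ(x - s)) - 1)`, and the free boundary is
necessarily `s = θ⁻¹ log(θu₀ + 1 + ((θu₀+1)² - 1)^(1/2))`. -/
theorem obstacle_problem_uniqueness
    (θ u₀ : ℝ) (hθ : 0 < θ) (hu₀ : 0 < u₀) (s : ℝ) (hs : 0 < s) (u : ℝ → ℝ)
    (hdiff : ∀ x ∈ Set.Icc (0 : ℝ) s,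
      DifferentiableAt ℝ u x ∧ DifferentiableAt ℝ (deriv u) x)
    (hcont : ContinuousOn (deriv (deriv u)) (Set.Icc (0 : ℝ) s))
    (hode : ∀ x ∈ Set.Ioo (0 : ℝ) s,
      deriv (deriv u) x = θ * Real.sqrt (1 + (deriv u x) ^ 2))
    (h0 : u 0 = u₀) (hsB : u s = 0) (hsC : deriv u s = 0) :
    (∀ x ∈ Set.Icc (0 : ℝ) s, u x = θ⁻¹ * (Real.cosh (θ * (x - s)) - 1)) ∧
    s = θ⁻¹ * Real.log (θ * u₀ + 1 + Real.sqrt ((θ * u₀ + 1) ^ 2 - 1)) := by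
  -- The ODE extends to the closed interval by continuity.
  have key : ∀ x ∈ Set.Icc (0 : ℝ) s,
      deriv (deriv u) x = θ * Real.sqrt (1 + (deriv u x) ^ 2) := by
    intro x hx
    have hxc : x ∈ closure (Set.Ioo (0 : ℝ) s) := by
      rwa [closure_Ioo hs.ne]
    have hne : (nhdsWithin x (Set.Ioo (0 : ℝ) s)).NeBot :=
      mem_closure_iff_nhdsWithin_neBot.1 hxc
    have t1 : Filter.Tendsto (deriv (deriv u)) (nhdsWithin x (Set.Ioo (0 : ℝ) s))
        (nhds (deriv (deriv u) x)) :=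
      (hcont x hx).mono Set.Ioo_subset_Icc_self
    have t2 : Filter.Tendsto (fun y => θ * Real.sqrt (1 + (deriv u y) ^ 2))
        (nhdsWithin x (Set.Ioo (0 : ℝ) s))
        (nhds (θ * Real.sqrt (1 + (deriv u x) ^ 2))) := by
      have hc : ContinuousAt (fun y => θ * Real.sqrt (1 + (deriv u y) ^ 2)) x := by
        have := (hdiff x hx).2.continuousAt
        fun_prop
      exact hc.continuousWithinAt
    have t1' : Filter.Tendsto (deriv (deriv u)) (nhdsWithin x (Set.Ioo (0 : ℝ) s))
        (nhds (θ * Real.sqrt (1 + (deriv u x) ^ 2))) := by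
      refine t2.congr' ?_
      filter_upwards [self_mem_nhdsWithin] with y hy
      exact (hode y hy).symm
    exact tendsto_nhds_unique t1 t1'
  -- First integral: arsinh (u' x) - θ x is constant.
  have sqrtpos : ∀ y : ℝ, 0 < Real.sqrt (1 + y ^ 2) := fun y =>
    Real.sqrt_pos.2 (by positivity)
  have hu'cont : ContinuousOn (deriv u) (Set.Icc (0 : ℝ) s) := fun x hx =>
    ((hdiff x hx).2.continuousAt).continuousWithinAt
  set g : ℝ → ℝ := fun x => Real.arsinh (deriv u x) - θ * x with hg
  have gderiv : ∀ x ∈ Set.Icc (0 : ℝ) s, HasDerivAt g 0 x := by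
    intro x hx
    have h1 : HasDerivAt (deriv u) (deriv (deriv u) x) x := (hdiff x hx).2.hasDerivAt
    have h2 : HasDerivAt (fun y => Real.arsinh (deriv u y))
        ((Real.sqrt (1 + (deriv u x) ^ 2))⁻¹ * deriv (deriv u) x) x :=
      (Real.hasDerivAt_arsinh _).comp x h1
    have h3 : (Real.sqrt (1 + (deriv u x) ^ 2))⁻¹ * deriv (deriv u) x = θ := by
      rw [key x hx]
      field_simp [(sqrtpos (deriv u x)).ne']
    have h4 : HasDerivAt (fun y => θ * y) θ x := by
      simpa using (hasDerivAt_id x).const_mul θ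
    have := (h3 ▸ h2).sub h4
    rw [hg]; simpa [Pi.sub_def] using this
  have gcont : ContinuousOn g (Set.Icc (0 : ℝ) s) := fun x hx =>
    ((gderiv x hx).continuousAt).continuousWithinAt
  have gconst : ∀ x ∈ Set.Icc (0 : ℝ) s, g x = g 0 :=
    constant_of_has_deriv_right_zero gcont
      (fun x hx => (gderiv x (Set.Ico_subset_Icc_self hx)).hasDerivWithinAt)
  have hu' : ∀ x ∈ Set.Icc (0 : ℝ) s, deriv u x = Real.sinh (θ * (x - s)) := by
    intro x hx
    have h1 : g x = g s := by
      rw [gconst x hx, gconst s (Set.right_mem_Icc.2 hs.le)]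
    have h2 : Real.arsinh (deriv u x) = θ * (x - s) := by
      simp only [hg, hsC, Real.arsinh_zero] at h1
      linarith [h1]
    have := congrArg Real.sinh h2
    rwa [Real.sinh_arsinh] at this
  -- Second integration: u x - θ⁻¹ cosh (θ (x - s)) is constant.
  set G : ℝ → ℝ := fun x => u x - θ⁻¹ * Real.cosh (θ * (x - s)) with hG
  have Gderiv : ∀ x ∈ Set.Icc (0 : ℝ) s, HasDerivAt G 0 x := by
    intro x hx
    have h1 : HasDerivAt (fun y => θ * (y - s)) θ x := by
      simpa using ((hasDerivAt_id x).sub_const s).const_mul θ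
    have h2 : HasDerivAt (fun y => Real.cosh (θ * (y - s)))
        (Real.sinh (θ * (x - s)) * θ) x := (Real.hasDerivAt_cosh _).comp x h1
    have h3 : HasDerivAt (fun y => θ⁻¹ * Real.cosh (θ * (y - s)))
        (Real.sinh (θ * (x - s))) x := by
      have := h2.const_mul θ⁻¹
      have e : θ⁻¹ * (Real.sinh (θ * (x - s)) * θ) = Real.sinh (θ * (x - s)) := by
        field_simp
      rwa [e] at this
    have h4 : HasDerivAt u (deriv u x) x := (hdiff x hx).1.hasDerivAt
    have := h4.sub h3
    rw [hu' x hx] at this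
    rw [hG]; simpa [Pi.sub_def] using this
  have Gcont : ContinuousOn G (Set.Icc (0 : ℝ) s) := fun x hx =>
    ((Gderiv x hx).continuousAt).continuousWithinAt
  have Gconst : ∀ x ∈ Set.Icc (0 : ℝ) s, G x = G 0 :=
    constant_of_has_deriv_right_zero Gcont
      (fun x hx => (Gderiv x (Set.Ico_subset_Icc_self hx)).hasDerivWithinAt)
  have hu : ∀ x ∈ Set.Icc (0 : ℝ) s,
      u x = θ⁻¹ * (Real.cosh (θ * (x - s)) - 1) := by
    intro x hx
    have h1 : G x = G s := by
      rw [Gconst x hx, Gconst s (Set.right_mem_Icc.2 hs.le)]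
    have h2 : G s = -θ⁻¹ := by
      simp [hG, hsB]
    have h3 : u x - θ⁻¹ * Real.cosh (θ * (x - s)) = -θ⁻¹ := h1.trans h2
    have hx2 : u x = θ⁻¹ * Real.cosh (θ * (x - s)) - θ⁻¹ := by linarith
    rw [hx2]; ring
  refine ⟨hu, ?_⟩
  -- Determine the free boundary.
  have h0' : θ⁻¹ * (Real.cosh (θ * s) - 1) = u₀ := by
    have := hu 0 (Set.left_mem_Icc.2 hs.le)
    rw [h0] at this
    rw [this, show θ * (0 - s) = -(θ * s) by ring, Real.cosh_neg]
  have hcosh : Real.cosh (θ * s) = θ * u₀ + 1 := by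
    have hθ' : θ ≠ 0 := hθ.ne'
    field_simp at h0'
    linarith
  have hsinh_nonneg : 0 ≤ Real.sinh (θ * s) :=
    Real.sinh_nonneg_iff.2 (by positivity)
  have hsq : (θ * u₀ + 1) ^ 2 - 1 = Real.sinh (θ * s) ^ 2 := by
    have := Real.cosh_sq_sub_sinh_sq (θ * s)
    rw [hcosh] at this
    linarith
  have hsqrt : Real.sqrt ((θ * u₀ + 1) ^ 2 - 1) = Real.sinh (θ * s) := by
    rw [hsq, Real.sqrt_sq hsinh_nonneg]
  have hexp : θ * u₀ + 1 + Real.sqrt ((θ * u₀ + 1) ^ 2 - 1) = Real.exp (θ * s) := by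
    rw [hsqrt, ← hcosh, Real.cosh_add_sinh]
  rw [hexp, Real.log_exp]
  field_simp
end

section
/- Let u : ℝ → ℝ be twice differentiable on an interval I and satisfy u''(x) = −1 − u(x) − (u'(x))² for all x ∈ I. Then the quantity E(x) = ((u'(x))² + u(x) + 1/2) · e^{2u(x)} is constant on I. -/
/-- Conservation law for the dynamical free boundary problem: along any twice
differentiable solution of `u'' = -1 - u - (u')²` on an interval `I`, the
quantity `E(x) = ((u'(x))² + u(x) + 1/2) e^(2u(x))` is constant on `I`. -/
theorem dynamical_problem_energy_conserved
    (u : ℝ → ℝ) (I : Set ℝ) (hI : Set.OrdConnected I)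
    (hdiff : ∀ x ∈ I,
      DifferentiableAt ℝ u x ∧ DifferentiableAt ℝ (deriv u) x)
    (hode : ∀ x ∈ I,
      deriv (deriv u) x = -1 - u x - (deriv u x) ^ 2) :
    ∀ x ∈ I, ∀ y ∈ I,
      ((deriv u x) ^ 2 + u x + 1 / 2) * Real.exp (2 * u x)
        = ((deriv u y) ^ 2 + u y + 1 / 2) * Real.exp (2 * u y) := by
  set E : ℝ → ℝ := fun x => ((deriv u x) ^ 2 + u x + 1 / 2) * Real.exp (2 * u x)
    with hE
  have hderiv : ∀ x ∈ I, HasDerivAt E 0 x := by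
    intro x hx
    have hu : HasDerivAt u (deriv u x) x := (hdiff x hx).1.hasDerivAt
    have hu' : HasDerivAt (deriv u) (-1 - u x - (deriv u x) ^ 2) x := by
      have := (hdiff x hx).2.hasDerivAt
      rwa [hode x hx] at this
    have h1 : HasDerivAt (fun x => (deriv u x) ^ 2 + u x + 1 / 2)
        (2 * deriv u x * (-1 - u x - (deriv u x) ^ 2) + deriv u x) x := by
      have := ((hu'.pow 2).add hu).add_const (1 / 2)
      simpa [pow_one, mul_comm, mul_assoc, mul_left_comm] using this
    have h2 : HasDerivAt (fun x => Real.exp (2 * u x))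
        (Real.exp (2 * u x) * (2 * deriv u x)) x := by
      exact (hu.const_mul 2).exp
    have := h1.fun_mul h2
    convert this using 1
    · rfl
    · rfl
    · ring
  have key : ∀ a ∈ I, ∀ b ∈ I, a ≤ b → E a = E b := by
    intro a ha b hb hab
    have hsub : Set.Icc a b ⊆ I := hI.out ha hb
    have := constant_of_has_deriv_right_zero
      (f := E) (a := a) (b := b)
      (fun y hy => (hderiv y (hsub hy)).continuousAt.continuousWithinAt)
      (fun y hy => (hderiv y (hsub (Set.mem_Icc_of_Ico hy))).hasDerivWithinAt)
    exact (this b (Set.right_mem_Icc.2 hab)).symm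
  intro x hx y hy
  rcases le_total x y with h | h
  · exact key x hx y hy h
  · exact (key y hy x hx h).symm
end

section
/- Let s > 0 and let u : ℝ → ℝ be twice differentiable on [0, s] and satisfy the dynamical free boundary problem u''(x) = −1 − u(x) − (u'(x))² on (0, s), with u(0) = 0, u(s) = 1, and u'(s) = 0. The initial velocity satisfies (u'(0))² = (3/2)e² − 1/2. -/
/-- Initial velocity for the dynamical free boundary problem: if `u` is twice
differentiable on `[0, s]` and satisfies `u'' = -1 - u - (u')²` on `(0, s)`,
with `u(0) = 0`, `u(s) = 1` and `u'(s) = 0`, then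
`(u'(0))² = (3/2) e² - 1/2`. -/
theorem dynamical_problem_initial_velocity
    (s : ℝ) (hs : 0 < s) (u : ℝ → ℝ)
    (hdiff : ∀ x ∈ Set.Icc (0 : ℝ) s,
      DifferentiableAt ℝ u x ∧ DifferentiableAt ℝ (deriv u) x)
    (hode : ∀ x ∈ Set.Ioo (0 : ℝ) s,
      deriv (deriv u) x = -1 - u x - (deriv u x) ^ 2)
    (h0 : u 0 = 0) (hs1 : u s = 1) (hs2 : deriv u s = 0) :
    (deriv u 0) ^ 2 = 3 / 2 * Real.exp 2 - 1 / 2 := by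
  set f : ℝ → ℝ := fun x => ((deriv u x) ^ 2 + u x + 1/2) * Real.exp (2 * u x) with hf
  have hderiv : ∀ x ∈ Set.Ioo (0 : ℝ) s, HasDerivAt f 0 x := by
    intro x hx
    have hxc : x ∈ Set.Icc (0 : ℝ) s := Set.mem_Icc.2 ⟨hx.1.le, hx.2.le⟩
    obtain ⟨hu, hu'⟩ := hdiff x hxc
    have h1 : HasDerivAt u (deriv u x) x := hu.hasDerivAt
    have h2 : HasDerivAt (deriv u) (deriv (deriv u) x) x := hu'.hasDerivAt
    have h3 : HasDerivAt (fun y => (deriv u y) ^ 2 + u y + 1/2)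
        (2 * deriv u x * deriv (deriv u) x + deriv u x) x := by
      have := ((h2.pow 2).add h1).add_const (1/2)
      simpa [mul_comm, mul_assoc, mul_left_comm] using this
    have h4 : HasDerivAt (fun y => Real.exp (2 * u y))
        (Real.exp (2 * u x) * (2 * deriv u x)) x := by
      have := (Real.hasDerivAt_exp (2 * u x)).comp x (h1.const_mul 2)
      exact this
    have h5 : HasDerivAt (fun y => ((deriv u y) ^ 2 + u y + 1/2) * Real.exp (2 * u y))
        ((2 * deriv u x * deriv (deriv u) x + deriv u x) * Real.exp (2 * u x) +
          ((deriv u x) ^ 2 + u x + 1/2) * (Real.exp (2 * u x) * (2 * deriv u x))) x := h3.mul h4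
    convert h5 using 1
    have hOde := hode x hx
    rw [hOde]
    ring
  have hcont : ContinuousOn f (Set.Icc 0 s) := by
    intro x hx
    obtain ⟨hu, hu'⟩ := hdiff x hx
    exact (((((hu'.continuousAt.pow 2).add hu.continuousAt).add continuousAt_const).mul
      ((Real.continuous_exp.continuousAt).comp (hu.continuousAt.const_mul 2)))).continuousWithinAt
  have hdiffOn : DifferentiableOn ℝ f (interior (Set.Icc 0 s)) := by
    rw [interior_Icc]
    exact fun x hx => ((hderiv x hx).differentiableAt).differentiableWithinAt
  have hderiv0 : ∀ x ∈ interior (Set.Icc (0:ℝ) s), deriv f x = 0 := by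
    rw [interior_Icc]
    exact fun x hx => (hderiv x hx).deriv
  have hmono : MonotoneOn f (Set.Icc 0 s) :=
    monotoneOn_of_deriv_nonneg (convex_Icc 0 s) hcont hdiffOn
      (fun x hx => (hderiv0 x hx).ge)
  have hanti : AntitoneOn f (Set.Icc 0 s) :=
    antitoneOn_of_deriv_nonpos (convex_Icc 0 s) hcont hdiffOn
      (fun x hx => (hderiv0 x hx).le)
  have h0mem : (0:ℝ) ∈ Set.Icc (0:ℝ) s := Set.mem_Icc.2 ⟨le_refl 0, hs.le⟩
  have hsmem : s ∈ Set.Icc (0:ℝ) s := Set.mem_Icc.2 ⟨hs.le, le_refl s⟩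
  have heq : f 0 = f s :=
    le_antisymm (hmono h0mem hsmem hs.le) (hanti h0mem hsmem hs.le)
  have hf0 : f 0 = (deriv u 0) ^ 2 + 1/2 := by
    simp [hf, h0]
  have hfs : f s = 3/2 * Real.exp 2 := by
    simp [hf, hs1, hs2]
    ring
  rw [hf0, hfs] at heq
  linarith
end

section
/- Let s > 0 and let u : ℝ → ℝ be twice differentiable on [0, s] and satisfy u''(x) = −u(x) · e^{−u(x)} on (0, s), with u(0) = 0, u(s) = 1, and u'(s) = 0. Then, by conservation of energy, the initial velocity satisfies (u'(0))² = 2 − 4e^{−1}; that is, u'(0) = ±(2 − 4e^{−1})^{1/2} (numerically ±0.726967811…). -/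
/-- Initial velocity for Na's free boundary problem: if `u` is twice
differentiable on `[0, s]` and satisfies `u'' = -u e^(-u)` on `(0, s)`, with
`u(0) = 0`, `u(s) = 1` and `u'(s) = 0`, then `(u'(0))² = 2 - 4e⁻¹`, that is,
`u'(0) = ±(2 - 4e⁻¹)^(1/2)`. -/
theorem na_problem_initial_velocity
    (s : ℝ) (hs : 0 < s) (u : ℝ → ℝ)
    (hdiff : ∀ x ∈ Set.Icc (0 : ℝ) s,
      DifferentiableAt ℝ u x ∧ DifferentiableAt ℝ (deriv u) x)
    (hode : ∀ x ∈ Set.Ioo (0 : ℝ) s,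
      deriv (deriv u) x = -u x * Real.exp (-u x))
    (h0 : u 0 = 0) (hs1 : u s = 1) (hs2 : deriv u s = 0) :
    (deriv u 0) ^ 2 = 2 - 4 * Real.exp (-1) ∧
    (deriv u 0 = Real.sqrt (2 - 4 * Real.exp (-1)) ∨
      deriv u 0 = -Real.sqrt (2 - 4 * Real.exp (-1))) := by
  set E : ℝ → ℝ := fun x => (deriv u x) ^ 2 / 2 - (u x + 1) * Real.exp (-u x) with hE
  -- E has zero derivative on the interior
  have hE' : ∀ x ∈ Set.Ioo (0 : ℝ) s, HasDerivAt E 0 x := by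
    intro x hx
    have hxI : x ∈ Set.Icc (0 : ℝ) s := Set.mem_Icc.2 ⟨hx.1.le, hx.2.le⟩
    have hu : HasDerivAt u (deriv u x) x := (hdiff x hxI).1.hasDerivAt
    have hu' : HasDerivAt (deriv u) (deriv (deriv u) x) x := (hdiff x hxI).2.hasDerivAt
    have h1 : HasDerivAt (fun y => (deriv u y) ^ 2 / 2)
        (deriv u x * deriv (deriv u) x) x := by
      have := (hu'.fun_pow 2).div_const 2
      exact this.congr_deriv (by push_cast; ring)
    have hexp : HasDerivAt (fun y => Real.exp (-u y))
        (Real.exp (-u x) * (-(deriv u x))) x := by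
      have := (Real.hasDerivAt_exp (-u x)).comp x hu.fun_neg
      exact this
    have h2 : HasDerivAt (fun y => (u y + 1) * Real.exp (-u y))
        ((deriv u x) * Real.exp (-u x) + (u x + 1) * (Real.exp (-u x) * (-(deriv u x)))) x := by
      exact (hu.add_const 1).fun_mul hexp
    have h3 := h1.fun_sub h2
    have hode' := hode x hx
    refine h3.congr_deriv ?_
    rw [hode']
    ring
  -- E is constant equal to E s on (0, s]
  have hconst : ∀ x ∈ Set.Ioo (0 : ℝ) s, E x = E s := by
    intro x hx
    have hcont : ContinuousOn E (Set.Icc x s) := by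
      intro y hy
      have hyI : Set.Icc x s ⊆ Set.Icc 0 s := Set.Icc_subset_Icc hx.1.le le_rfl
      have hy' := hyI hy
      exact (((hdiff y hy').2.continuousAt.pow 2).div_const 2 |>.sub
        (((hdiff y hy').1.continuousAt.add continuousAt_const).mul
          ((Real.continuous_exp.continuousAt).comp (hdiff y hy').1.continuousAt.neg))).continuousWithinAt
    have hd : ∀ y ∈ Set.Ico x s, HasDerivWithinAt E 0 (Set.Ici y) y := by
      intro y hy
      exact (hE' y ⟨lt_of_lt_of_le hx.1 hy.1, hy.2⟩).hasDerivWithinAt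
    have := constant_of_has_deriv_right_zero hcont hd s (Set.right_mem_Icc.2 hx.2.le)
    exact this.symm
  -- pass to the limit x → 0 to get E 0 = E s
  have hE0 : E 0 = E s := by
    have hcont0 : ContinuousWithinAt E (Set.Ioo 0 s) 0 := by
      have : ContinuousAt E 0 := by
        have h0I : (0:ℝ) ∈ Set.Icc (0:ℝ) s := Set.mem_Icc.2 ⟨le_rfl, hs.le⟩
        exact ((hdiff 0 h0I).2.continuousAt.pow 2).div_const 2 |>.sub
          (((hdiff 0 h0I).1.continuousAt.add continuousAt_const).mul
            ((Real.continuous_exp.continuousAt).comp (hdiff 0 h0I).1.continuousAt.neg))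
      exact this.continuousWithinAt
    have hne : (nhdsWithin (0:ℝ) (Set.Ioo 0 s)).NeBot := by
      refine mem_closure_iff_nhdsWithin_neBot.1 ?_
      rw [closure_Ioo hs.ne]
      exact Set.left_mem_Icc.2 hs.le
    have h1 : Filter.Tendsto E (nhdsWithin 0 (Set.Ioo 0 s)) (nhds (E 0)) := hcont0
    have h2 : Filter.Tendsto E (nhdsWithin 0 (Set.Ioo 0 s)) (nhds (E s)) := by
      refine Filter.Tendsto.congr' ?_ tendsto_const_nhds
      filter_upwards [self_mem_nhdsWithin] with y hy
      exact (hconst y hy).symm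
    exact tendsto_nhds_unique h1 h2
  have hEs : E s = -(2 * Real.exp (-1)) := by
    simp only [hE, hs1, hs2]
    norm_num
  have hE00 : E 0 = (deriv u 0) ^ 2 / 2 - 1 := by
    simp [hE, h0]
  have key : (deriv u 0) ^ 2 = 2 - 4 * Real.exp (-1) := by
    have := hE0
    rw [hE00, hEs] at this
    linarith
  refine ⟨key, ?_⟩
  have ha : (0:ℝ) ≤ 2 - 4 * Real.exp (-1) := key ▸ sq_nonneg _
  have habs : |deriv u 0| = Real.sqrt (2 - 4 * Real.exp (-1)) := by
    rw [← key, Real.sqrt_sq_eq_abs]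
  rcases abs_cases (deriv u 0) with ⟨h, _⟩ | ⟨h, _⟩
  · exact Or.inl (h ▸ habs)
  · right
    rw [← habs, h]
    ring
end
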